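/- Let 𝓑 be a finite family of axis-parallel rectangles in ℝ² and suppose there exist two horizontal lines l₁, l₂ such that every rectangle in 𝓑 intersects at least one of them. Then τ(𝓑) ≤ ⌊3ν(𝓑)/2⌋. -/
import Mathlib


/-- A finite point set `S` pierces the family `F` if every member contains a point of `S`. -/
def Piercing {α : Type*} (S : Finset α) (F : Finset (Set α)) : Prop :=
  ∀ B ∈ F, ∃ p ∈ S, p ∈ B

/-- The piercing (transversal) number τ of a finite family of sets. -/
noncomputable def tau {α : Type*} (F : Finset (Set α)) : ℕ :=
  sInf {n | ∃ S : Finset α, S.card = n ∧ Piercing S F}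

/-- The independence number ν : the maximal number of pairwise disjoint members. -/
noncomputable def nu {α : Type*} (F : Finset (Set α)) : ℕ :=
  sSup {n | ∃ G ⊆ F, G.card = n ∧ (G : Set (Set α)).PairwiseDisjoint id}

/-- An axis-parallel box in ℝ^d : a product of d nonempty closed intervals. -/
def IsBox (d : ℕ) (B : Set (Fin d → ℝ)) : Prop :=
  ∃ l u : Fin d → ℝ, l ≤ u ∧ B = Set.Icc l u

/-- `f n d` : the supremum of τ over finite families of boxes in ℝ^d with ν ≤ n. -/
noncomputable def fBox (n d : ℕ) : ℕ :=
  sSup {t | ∃ F : Finset (Set (Fin d → ℝ)),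
    (∀ B ∈ F, IsBox d B) ∧ nu F ≤ n ∧ tau F = t}

section Aux

variable {α : Type*}

lemma tau_le_card {S : Finset α} {F : Finset (Set α)} (h : Piercing S F) :
    tau F ≤ S.card :=
  Nat.sInf_le ⟨S, rfl, h⟩

lemma nu_bddAbove (F : Finset (Set α)) :
    BddAbove {n | ∃ G ⊆ F, G.card = n ∧ (G : Set (Set α)).PairwiseDisjoint id} := by
  refine ⟨F.card, ?_⟩
  rintro n ⟨G, hG, rfl, -⟩
  exact Finset.card_le_card hG

lemma card_le_nu {G F : Finset (Set α)} (hGF : G ⊆ F)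
    (hdisj : (G : Set (Set α)).PairwiseDisjoint id) : G.card ≤ nu F :=
  le_csSup (nu_bddAbove F) ⟨G, hGF, rfl, hdisj⟩

lemma nu_spec (F : Finset (Set α)) :
    ∃ G ⊆ F, G.card = nu F ∧ (G : Set (Set α)).PairwiseDisjoint id := by
  have hne : {n | ∃ G ⊆ F, G.card = n ∧ (G : Set (Set α)).PairwiseDisjoint id}.Nonempty :=
    ⟨0, ∅, Finset.empty_subset F, Finset.card_empty, by simp⟩
  exact Nat.sSup_mem hne (nu_bddAbove F)

lemma tau_spec [Nonempty α] {F : Finset (Set α)} (h : ∀ B ∈ F, ∃ p, p ∈ B) :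
    ∃ S : Finset α, S.card = tau F ∧ Piercing S F := by
  classical
  have h' : ∀ B : Set α, ∃ p : α, B ∈ F → p ∈ B := by
    intro B
    by_cases hB : B ∈ F
    · obtain ⟨p, hp⟩ := h B hB
      exact ⟨p, fun _ => hp⟩
    · exact ⟨Classical.arbitrary α, fun hB' => absurd hB' hB⟩
  choose f hf using h'
  have hp : Piercing (F.image f) F := fun B hB => ⟨f B, Finset.mem_image_of_mem f hB, hf B hB⟩
  have hne : {n | ∃ S : Finset α, S.card = n ∧ Piercing S F}.Nonempty :=
    ⟨(F.image f).card, F.image f, rfl, hp⟩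
  exact Nat.sInf_mem hne

lemma mem_box_iff {l u p : Fin 2 → ℝ} :
    p ∈ Set.Icc l u ↔ (l 0 ≤ p 0 ∧ l 1 ≤ p 1) ∧ (p 0 ≤ u 0 ∧ p 1 ≤ u 1) := by
  rw [Set.mem_Icc, Pi.le_def, Pi.le_def, Fin.forall_fin_two, Fin.forall_fin_two]

/-- Helly for finite pairwise-intersecting families of boxes in the plane. -/
lemma helly_boxes (K : Finset (Set (Fin 2 → ℝ))) (l u : Set (Fin 2 → ℝ) → Fin 2 → ℝ)
    (hK : ∀ C ∈ K, C = Set.Icc (l C) (u C))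
    (hint : ∀ C ∈ K, ∀ D ∈ K, (C ∩ D).Nonempty) :
    ∃ q, ∀ C ∈ K, q ∈ C := by
  rcases K.eq_empty_or_nonempty with h | h
  · exact ⟨0, by simp [h]⟩
  · refine ⟨fun i => K.sup' h (fun C => l C i), ?_⟩
    intro C hC
    rw [hK C hC, Set.mem_Icc]
    constructor
    · rw [Pi.le_def]
      intro i
      exact Finset.le_sup' (fun C => l C i) hC
    · rw [Pi.le_def]
      intro i
      apply Finset.sup'_le
      intro D hD
      obtain ⟨z, hz⟩ := hint D hD C hC
      have hzD := hz.1
      have hzC := hz.2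
      rw [hK D hD, Set.mem_Icc] at hzD
      rw [hK C hC, Set.mem_Icc] at hzC
      exact le_trans (hzD.1 i) (hzC.2 i)

end Aux

/-- The main induction: if `ν(F) ≤ n` then `τ(F) ≤ ⌊3n/2⌋`. -/
theorem two_lines_key (c₁ c₂ : ℝ) :
    ∀ n : ℕ, ∀ F : Finset (Set (Fin 2 → ℝ)),
      (∀ B ∈ F, IsBox 2 B) →
      (∀ B ∈ F, ∃ p ∈ B, p 1 = c₁ ∨ p 1 = c₂) →
      nu F ≤ n → tau F ≤ 3 * n / 2 := by
  intro n
  induction n using Nat.strong_induction_on with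
  | _ n IH =>
  intro F hF hline hn
  classical
  -- choose lower/upper corner functions
  have hlu' : ∀ B : Set (Fin 2 → ℝ), ∃ lu : (Fin 2 → ℝ) × (Fin 2 → ℝ),
      B ∈ F → lu.1 ≤ lu.2 ∧ B = Set.Icc lu.1 lu.2 := by
    intro B
    by_cases hB : B ∈ F
    · obtain ⟨l, u, h1, h2⟩ := hF B hB
      exact ⟨(l, u), fun _ => ⟨h1, h2⟩⟩
    · exact ⟨(0, 0), fun h => absurd h hB⟩
  choose lu hlu using hlu'
  set l : Set (Fin 2 → ℝ) → Fin 2 → ℝ := fun B => (lu B).1 with hldef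
  set u : Set (Fin 2 → ℝ) → Fin 2 → ℝ := fun B => (lu B).2 with hudef
  have hbox : ∀ B ∈ F, B = Set.Icc (l B) (u B) := fun B hB => (hlu B hB).2
  have hle : ∀ B ∈ F, l B ≤ u B := fun B hB => (hlu B hB).1
  have hBne : ∀ B ∈ F, B.Nonempty := by
    intro B hB
    rw [hbox B hB]
    exact Set.nonempty_Icc.2 (hle B hB)
  by_cases hFe : F = ∅
  · -- empty family
    have hp : Piercing (∅ : Finset (Fin 2 → ℝ)) F := by
      intro B hB
      rw [hFe] at hB
      exact absurd hB (Finset.notMem_empty B)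
    have := tau_le_card hp
    simp only [Finset.card_empty] at this
    omega
  have hFne : F.Nonempty := Finset.nonempty_iff_ne_empty.2 hFe
  have h1nu : 1 ≤ nu F := by
    obtain ⟨B, hB⟩ := hFne
    have := card_le_nu (G := {B}) (Finset.singleton_subset_iff.2 hB) (by simp)
    simpa using this
  by_cases h2 : nu F ≤ 1
  · -- base case: all boxes pairwise intersect, Helly gives one piercing point
    have hint : ∀ C ∈ F, ∀ D ∈ F, (C ∩ D).Nonempty := by
      intro C hC D hD
      by_cases hCD : C = D
      · subst hCD
        rw [Set.inter_self]
        exact hBne C hC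
      · by_contra hemp
        have hCDe : C ∩ D = ∅ := Set.not_nonempty_iff_eq_empty.mp hemp
        have hdisj : (↑({C, D} : Finset (Set (Fin 2 → ℝ))) :
            Set (Set (Fin 2 → ℝ))).PairwiseDisjoint id := by
          intro x hx y hy hxy
          simp only [Finset.coe_insert, Finset.coe_singleton, Set.mem_insert_iff,
            Set.mem_singleton_iff] at hx hy
          rcases hx with rfl | rfl <;> rcases hy with rfl | rfl
          · exact absurd rfl hxy
          · exact Set.disjoint_iff_inter_eq_empty.2 hCDe
          · exact (Set.disjoint_iff_inter_eq_empty.2 hCDe).symm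
          · exact absurd rfl hxy
        have hsub : ({C, D} : Finset (Set (Fin 2 → ℝ))) ⊆ F := by
          intro x hx
          simp only [Finset.mem_insert, Finset.mem_singleton] at hx
          rcases hx with rfl | rfl
          · exact hC
          · exact hD
        have := card_le_nu hsub hdisj
        rw [Finset.card_pair hCD] at this
        omega
    obtain ⟨q, hq⟩ := helly_boxes F l u hbox hint
    have hp : Piercing {q} F := fun B hB => ⟨q, Finset.mem_singleton_self q, hq B hB⟩
    have := tau_le_card hp
    simp only [Finset.card_singleton] at this
    omega
  -- inductive step: ν(F) ≥ 2
  push_neg at h2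
  have hn2 : 2 ≤ n := le_trans h2 hn
  -- the set of disjoint (ordered) pairs
  set pairs : Finset (Set (Fin 2 → ℝ) × Set (Fin 2 → ℝ)) :=
    (F ×ˢ F).filter (fun p => p.1 ∩ p.2 = ∅) with hpairsdef
  have hpne : pairs.Nonempty := by
    obtain ⟨G, hGF, hGcard, hGdisj⟩ := nu_spec F
    have hG2 : 1 < G.card := by omega
    obtain ⟨x, hx, y, hy, hxy⟩ := Finset.one_lt_card.mp hG2
    refine ⟨(x, y), ?_⟩
    rw [hpairsdef, Finset.mem_filter, Finset.mem_product]
    refine ⟨⟨hGF hx, hGF hy⟩, ?_⟩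
    exact Set.disjoint_iff_inter_eq_empty.1 (hGdisj (Finset.mem_coe.2 hx) (Finset.mem_coe.2 hy) hxy)
  obtain ⟨p₀, hp₀mem, hp₀min⟩ :=
    pairs.exists_min_image (fun p => max (u p.1 0) (u p.2 0)) hpne
  rw [hpairsdef, Finset.mem_filter, Finset.mem_product] at hp₀mem
  obtain ⟨⟨hB₁F, hB₂F⟩, h12⟩ := hp₀mem
  set B₁ := p₀.1 with hB₁def
  set B₂ := p₀.2 with hB₂def
  set b : ℝ := max (u B₁ 0) (u B₂ 0) with hbdef
  -- boxes fully to the left of b pairwise intersect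
  set K : Finset (Set (Fin 2 → ℝ)) := F.filter (fun C => u C 0 < b) with hKdef
  have hKint : ∀ C ∈ K, ∀ D ∈ K, (C ∩ D).Nonempty := by
    intro C hC D hD
    rw [hKdef, Finset.mem_filter] at hC hD
    by_contra hemp
    have hCDe : C ∩ D = ∅ := Set.not_nonempty_iff_eq_empty.mp hemp
    have hmem : (C, D) ∈ pairs := by
      rw [hpairsdef, Finset.mem_filter, Finset.mem_product]
      exact ⟨⟨hC.1, hD.1⟩, hCDe⟩
    have := hp₀min (C, D) hmem
    simp only at this
    have hlt : max (u C 0) (u D 0) < b := max_lt hC.2 hD.2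
    have : b ≤ max (u C 0) (u D 0) := this
    linarith
  obtain ⟨q, hq⟩ := helly_boxes K l u
    (fun C hC => hbox C (Finset.mem_of_mem_filter C hC)) hKint
  -- the two points on the lines at x = b
  set pb₁ : Fin 2 → ℝ := ![b, c₁] with hpb₁def
  set pb₂ : Fin 2 → ℝ := ![b, c₂] with hpb₂def
  have hpb₁0 : pb₁ 0 = b := rfl
  have hpb₁1 : pb₁ 1 = c₁ := rfl
  have hpb₂0 : pb₂ 0 = b := rfl
  have hpb₂1 : pb₂ 1 = c₂ := rfl
  -- if a box's x-interval contains b, one of the two line points pierces it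
  have hmemline : ∀ C ∈ F, l C 0 ≤ b → b ≤ u C 0 → pb₁ ∈ C ∨ pb₂ ∈ C := by
    intro C hC hl0 hu0
    obtain ⟨p, hpC, hp1⟩ := hline C hC
    have hCeq := hbox C hC
    rw [hCeq, mem_box_iff] at hpC
    rcases hp1 with h | h
    · left
      rw [hCeq, mem_box_iff, hpb₁0, hpb₁1]
      refine ⟨⟨hl0, ?_⟩, ⟨hu0, ?_⟩⟩
      · rw [← h]; exact hpC.1.2
      · rw [← h]; exact hpC.2.2
    · right
      rw [hCeq, mem_box_iff, hpb₂0, hpb₂1]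
      refine ⟨⟨hl0, ?_⟩, ⟨hu0, ?_⟩⟩
      · rw [← h]; exact hpC.1.2
      · rw [← h]; exact hpC.2.2
  -- any box with right edge ≤ b is pierced by one of the three points
  have hpierce_le : ∀ C ∈ F, u C 0 ≤ b → (q ∈ C ∨ pb₁ ∈ C ∨ pb₂ ∈ C) := by
    intro C hC hub
    rcases lt_or_eq_of_le hub with h | h
    · left
      exact hq C (by rw [hKdef, Finset.mem_filter]; exact ⟨hC, h⟩)
    · right
      have hl0 : l C 0 ≤ b := by
        have := hle C hC 0
        rw [← h]; exact this
      exact hmemline C hC hl0 (le_of_eq h.symm)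
  -- the surviving family
  set F'' : Finset (Set (Fin 2 → ℝ)) :=
    F.filter (fun C => q ∉ C ∧ pb₁ ∉ C ∧ pb₂ ∉ C) with hF''def
  have hF''sub : F'' ⊆ F := Finset.filter_subset _ F
  -- survivors live strictly to the right of b
  have hleft : ∀ C ∈ F'', b < l C 0 := by
    intro C hC''
    rw [hF''def, Finset.mem_filter] at hC''
    obtain ⟨hC, hq', hp1', hp2'⟩ := hC''
    have hub : b ≤ u C 0 := by
      by_contra hcon
      push_neg at hcon
      rcases hpierce_le C hC (le_of_lt hcon) with h | h | h
      · exact hq' h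
      · exact hp1' h
      · exact hp2' h
    by_contra hcon
    push_neg at hcon
    rcases hmemline C hC hcon hub with h | h
    · exact hp1' h
    · exact hp2' h
  -- B₁ and B₂ are disjoint from every survivor
  have hdisj1 : ∀ C ∈ F'', Disjoint B₁ C := by
    intro C hC''
    rw [Set.disjoint_left]
    intro z hz1 hzC
    have hC := hF''sub hC''
    rw [hbox B₁ hB₁F, mem_box_iff] at hz1
    rw [hbox C hC, mem_box_iff] at hzC
    have h1 : z 0 ≤ b := le_trans hz1.2.1 (le_max_left _ _)
    have h2 : b < z 0 := lt_of_lt_of_le (hleft C hC'') hzC.1.1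
    linarith
  have hdisj2 : ∀ C ∈ F'', Disjoint B₂ C := by
    intro C hC''
    rw [Set.disjoint_left]
    intro z hz2 hzC
    have hC := hF''sub hC''
    rw [hbox B₂ hB₂F, mem_box_iff] at hz2
    rw [hbox C hC, mem_box_iff] at hzC
    have h1 : z 0 ≤ b := le_trans hz2.2.1 (le_max_right _ _)
    have h2 : b < z 0 := lt_of_lt_of_le (hleft C hC'') hzC.1.1
    linarith
  -- B₁ and B₂ are pierced, hence not survivors
  have hnotin : ∀ B, B ∈ F → u B 0 ≤ b → B ∉ F'' := by
    intro B hBF hub hBin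
    rw [hF''def, Finset.mem_filter] at hBin
    rcases hpierce_le B hBF hub with h | h | h
    · exact hBin.2.1 h
    · exact hBin.2.2.1 h
    · exact hBin.2.2.2 h
  have hB₁notin : B₁ ∉ F'' := hnotin B₁ hB₁F (le_max_left _ _)
  have hB₂notin : B₂ ∉ F'' := hnotin B₂ hB₂F (le_max_right _ _)
  have hB₁₂ : B₁ ≠ B₂ := by
    intro h
    have := hBne B₂ hB₂F
    rw [h, Set.inter_self] at h12
    rw [h12] at this
    exact Set.not_nonempty_empty this
  -- ν(F'') + 2 ≤ ν(F)
  obtain ⟨G'', hG''sub, hG''card, hG''disj⟩ := nu_spec F''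
  have hB₁G : B₁ ∉ G'' := fun h => hB₁notin (hG''sub h)
  have hB₂G : B₂ ∉ G'' := fun h => hB₂notin (hG''sub h)
  set G' : Finset (Set (Fin 2 → ℝ)) := insert B₁ (insert B₂ G'') with hG'def
  have hG'card : G'.card = nu F'' + 2 := by
    rw [hG'def, Finset.card_insert_of_notMem, Finset.card_insert_of_notMem hB₂G, hG''card]
    simp only [Finset.mem_insert]
    push_neg
    exact ⟨hB₁₂, hB₁G⟩
  have hG'sub : G' ⊆ F := by
    intro x hx
    rw [hG'def] at hx
    simp only [Finset.mem_insert] at hx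
    rcases hx with rfl | rfl | hx
    · exact hB₁F
    · exact hB₂F
    · exact hF''sub (hG''sub hx)
  have hG'disj : (↑G' : Set (Set (Fin 2 → ℝ))).PairwiseDisjoint id := by
    intro x hx y hy hxy
    rw [hG'def] at hx hy
    simp only [Finset.coe_insert, Set.mem_insert_iff, Finset.mem_coe] at hx hy
    have d12 : Disjoint B₁ B₂ := Set.disjoint_iff_inter_eq_empty.2 h12
    rcases hx with rfl | rfl | hx <;> rcases hy with rfl | rfl | hy
    · exact absurd rfl hxy
    · exact d12
    · exact hdisj1 y (hG''sub hy)
    · exact d12.symm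
    · exact absurd rfl hxy
    · exact hdisj2 y (hG''sub hy)
    · exact (hdisj1 x (hG''sub hx)).symm
    · exact (hdisj2 x (hG''sub hx)).symm
    · exact hG''disj (Finset.mem_coe.2 hx) (Finset.mem_coe.2 hy) hxy
  have hnu'' : nu F'' + 2 ≤ nu F := by
    have := card_le_nu hG'sub hG'disj
    rw [hG'card] at this
    exact this
  -- τ(F) ≤ τ(F'') + 3
  obtain ⟨S'', hS''card, hS''p⟩ := tau_spec (F := F'')
    (fun B hB => (hBne B (hF''sub hB)).imp (fun p hp => hp))
  set S : Finset (Fin 2 → ℝ) := insert q (insert pb₁ (insert pb₂ S'')) with hSdef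
  have hSp : Piercing S F := by
    intro B hB
    by_cases hB'' : B ∈ F''
    · obtain ⟨p, hpS, hpB⟩ := hS''p B hB''
      refine ⟨p, ?_, hpB⟩
      rw [hSdef]
      simp only [Finset.mem_insert]
      tauto
    · rw [hF''def, Finset.mem_filter] at hB''
      push_neg at hB''
      by_cases hq' : q ∈ B
      · exact ⟨q, by rw [hSdef]; simp, hq'⟩
      by_cases hp1' : pb₁ ∈ B
      · exact ⟨pb₁, by rw [hSdef]; simp, hp1'⟩
      · exact ⟨pb₂, by rw [hSdef]; simp, hB'' hB hq' hp1'⟩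
  have hScard : S.card ≤ tau F'' + 3 := by
    rw [hSdef]
    calc (insert q (insert pb₁ (insert pb₂ S''))).card
        ≤ (insert pb₁ (insert pb₂ S'')).card + 1 := Finset.card_insert_le _ _
      _ ≤ (insert pb₂ S'').card + 1 + 1 := by
          have := Finset.card_insert_le pb₁ (insert pb₂ S'')
          omega
      _ ≤ S''.card + 1 + 1 + 1 := by
          have := Finset.card_insert_le pb₂ S''
          omega
      _ = tau F'' + 3 := by omega
  have htauF : tau F ≤ tau F'' + 3 := le_trans (tau_le_card hSp) hScard
  -- apply the induction hypothesis to F''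
  have hIH : tau F'' ≤ 3 * (n - 2) / 2 := by
    refine IH (n - 2) (by omega) F'' (fun B hB => hF B (hF''sub hB))
      (fun B hB => hline B (hF''sub hB)) ?_
    omega
  omega

/-- Lemma 2 (two-line lemma): if every rectangle of a finite family in ℝ²
meets one of two horizontal lines y = c₁, y = c₂, then τ(𝓑) ≤ ⌊3ν(𝓑)/2⌋. -/
theorem tau_le_of_two_lines (F : Finset (Set (Fin 2 → ℝ)))
    (hF : ∀ B ∈ F, IsBox 2 B)
    (c₁ c₂ : ℝ)
    (hline : ∀ B ∈ F, ∃ p ∈ B, p 1 = c₁ ∨ p 1 = c₂) :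
    tau F ≤ 3 * nu F / 2 :=
  two_lines_key c₁ c₂ (nu F) F hF hline le_rfl
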